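/- With M(q) the tilted matrix of W and M̃(q) the tilted matrix of the HTR generator W̃ (same tilting on the (1,2) and (2,1) entries), one has M̃(q) = P_st M(F̃ − q)ᵀ P_st⁻¹ for all q ∈ ℝ. -/

import Mathlib

/-- with `M(q)` the tilted matrix of `W` and `M̃(q)` the tilted
matrix of the HTR generator `W̃` (same tilting of the `(1,2)` and `(2,1)`
entries), one has `M̃(q) = Pst M(F̃ − q)ᵀ Pst⁻¹` for all `q`, where
`F̃ = log(W₁₂ pst₂/(W₂₁ pst₁))`. States `1,2` are indices `0,1`. -/
theorem tilted_HTR_symmetry {m : ℕ}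
    (W Wst Wtil : Matrix (Fin (m + 3)) (Fin (m + 3)) ℝ)
    (hoff : ∀ i j : Fin (m + 3), i ≠ j → 0 ≤ W i j)
    (hcol : ∀ j : Fin (m + 3), ∑ i : Fin (m + 3), W i j = 0)
    (h12pos : 0 < W 0 1) (h21pos : 0 < W 1 0)
    (h12 : Wst 0 1 = 0) (h21 : Wst 1 0 = 0)
    (h11 : Wst 0 0 = W 0 0 + W 1 0) (h22 : Wst 1 1 = W 1 1 + W 0 1)
    (hother : ∀ i j : Fin (m + 3),
      ¬((i = 0 ∧ j = 1) ∨ (i = 1 ∧ j = 0) ∨ (i = 0 ∧ j = 0) ∨ (i = 1 ∧ j = 1)) →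
      Wst i j = W i j)
    (pst : Fin (m + 3) → ℝ) (hpst : ∀ i, 0 < pst i)
    (hsteady : Wst.mulVec pst = 0)
    (hWtil : Wtil = W - Wst + Matrix.diagonal pst * Wst.transpose *
        Matrix.diagonal (fun i => (pst i)⁻¹))
    (M Mt : ℝ → Matrix (Fin (m + 3)) (Fin (m + 3)) ℝ)
    (hM : ∀ q, M q = Matrix.of fun i j =>
      if i = 0 ∧ j = 1 then W 0 1 * Real.exp (-q)
      else if i = 1 ∧ j = 0 then W 1 0 * Real.exp q
      else W i j)
    (hMt : ∀ q, Mt q = Matrix.of fun i j =>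
      if i = 0 ∧ j = 1 then Wtil 0 1 * Real.exp (-q)
      else if i = 1 ∧ j = 0 then Wtil 1 0 * Real.exp q
      else Wtil i j) :
    ∀ q : ℝ, Mt q =
      Matrix.diagonal pst *
        (M (Real.log (W 0 1 * pst 1 / (W 1 0 * pst 0)) - q)).transpose *
        Matrix.diagonal (fun i => (pst i)⁻¹) := by
  intro q
  have hp0 := hpst 0
  have hp1 := hpst 1
  have h01 : (0 : Fin (m + 3)) ≠ 1 := by simp [Fin.ext_iff]
  have hpos : 0 < W 0 1 * pst 1 / (W 1 0 * pst 0) := by positivity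
  have hE : Real.exp (Real.log (W 0 1 * pst 1 / (W 1 0 * pst 0))) =
      W 0 1 * pst 1 / (W 1 0 * pst 0) := Real.exp_log hpos
  have hWt : ∀ i j, Wtil i j = W i j - Wst i j + pst i * Wst j i * (pst j)⁻¹ := by
    intro i j
    rw [hWtil]
    simp [Matrix.add_apply, Matrix.sub_apply, Matrix.mul_diagonal,
      Matrix.diagonal_mul, Matrix.transpose_apply, mul_assoc]
  ext i j
  rw [hMt, hM]
  rw [show (Matrix.diagonal pst *
        (Matrix.of fun i j =>
          if i = 0 ∧ j = 1 then
            W 0 1 * Real.exp (-(Real.log (W 0 1 * pst 1 / (W 1 0 * pst 0)) - q))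
          else if i = 1 ∧ j = 0 then
            W 1 0 * Real.exp (Real.log (W 0 1 * pst 1 / (W 1 0 * pst 0)) - q)
          else W i j).transpose *
        Matrix.diagonal (fun i => (pst i)⁻¹)) i j
      = pst i * (if j = 0 ∧ i = 1 then
            W 0 1 * Real.exp (-(Real.log (W 0 1 * pst 1 / (W 1 0 * pst 0)) - q))
          else if j = 1 ∧ i = 0 then
            W 1 0 * Real.exp (Real.log (W 0 1 * pst 1 / (W 1 0 * pst 0)) - q)
          else W j i) * (pst j)⁻¹ from by
    rw [Matrix.mul_diagonal, Matrix.diagonal_mul, Matrix.transpose_apply, Matrix.of_apply]]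
  simp only [Matrix.of_apply]
  by_cases hc1 : i = 0 ∧ j = 1
  · obtain ⟨rfl, rfl⟩ := hc1
    rw [if_pos ⟨rfl, rfl⟩]
    rw [if_neg (fun h : (1:Fin (m+3)) = 0 ∧ (0:Fin (m+3)) = 1 => h01 h.1.symm)]
    rw [if_pos ⟨rfl, rfl⟩]
    rw [hWt, h12, h21, Real.exp_sub, Real.exp_neg, hE]
    field_simp
    ring
  · rw [if_neg hc1]
    by_cases hc2 : i = 1 ∧ j = 0
    · obtain ⟨rfl, rfl⟩ := hc2
      rw [if_pos ⟨rfl, rfl⟩, if_pos ⟨rfl, rfl⟩]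
      rw [hWt, h12, h21, Real.exp_neg, Real.exp_sub, hE]
      have hne1 : W 0 1 * pst 1 ≠ 0 := by positivity
      have hne2 : W 1 0 * pst 0 ≠ 0 := by positivity
      field_simp
      ring
    · have hc1' : ¬(j = 0 ∧ i = 1) := fun h => hc2 ⟨h.2, h.1⟩
      have hc2' : ¬(j = 1 ∧ i = 0) := fun h => hc1 ⟨h.2, h.1⟩
      rw [if_neg hc2, if_neg hc1', if_neg hc2', hWt]
      by_cases hd0 : i = 0 ∧ j = 0
      · obtain ⟨rfl, rfl⟩ := hd0
        have hp : pst 0 ≠ 0 := hp0.ne'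
        field_simp
        ring
      · by_cases hd1 : i = 1 ∧ j = 1
        · obtain ⟨rfl, rfl⟩ := hd1
          have hp : pst 1 ≠ 0 := hp1.ne'
          field_simp
          ring
        · have hij : Wst i j = W i j := hother i j (by
            rintro (h | h | h | h)
            exacts [hc1 h, hc2 h, hd0 h, hd1 h])
          have hji : Wst j i = W j i := hother j i (by
            rintro (⟨h1, h2⟩ | ⟨h1, h2⟩ | ⟨h1, h2⟩ | ⟨h1, h2⟩)
            exacts [hc2 ⟨h2, h1⟩, hc1 ⟨h2, h1⟩, hd0 ⟨h2, h1⟩, hd1 ⟨h2, h1⟩])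
          rw [hij, hji]
          ring
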